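/- (Hardy-type inequality for decreasing functions.) Let r : (0,∞) → (0,∞) be decreasing, β ≥ 0, δ ≠ 1, λ > 0, and define R_δ(t) = ∫₀ᵗ s^β r(s) ds if δ < 1 and R_δ(t) = ∫_t^∞ s^β r(s) ds if δ > 1. Then there exists a constant C = C(β,δ,λ) such that ∫₀^∞ (R_δ(t)/t)^λ t^{δλ} dt/t ≤ C ∫₀^∞ r(t)^λ t^{λ(β+δ)} dt/t. -/

import Mathlib

open MeasureTheory Set ENNReal


/-- Scaling substitution for lintegrals on `(0,∞)`. -/
lemma lint_scale (c : ℝ) (hc : 0 < c) (g : ℝ → ℝ≥0∞) :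
    ∫⁻ t in Ioi (0:ℝ), g (c * t) = ENNReal.ofReal c⁻¹ * ∫⁻ u in Ioi (0:ℝ), g u := by
  have hemb : MeasurableEmbedding (fun t : ℝ => c * t) :=
    (Homeomorph.mulLeft₀ c hc.ne').measurableEmbedding
  have hpre : (fun t : ℝ => c * t) ⁻¹' (Ioi 0) = Ioi 0 := by
    ext x; simp [mem_preimage, mul_pos_iff_of_pos_left, hc]
  have h1 : ∫⁻ u in Ioi (0:ℝ), g u ∂(ENNReal.ofReal c⁻¹ • volume)
      = ENNReal.ofReal c⁻¹ * ∫⁻ u in Ioi (0:ℝ), g u := by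
    rw [Measure.restrict_smul, lintegral_smul_measure, smul_eq_mul]
  calc ∫⁻ t in Ioi (0:ℝ), g (c * t)
      = ∫⁻ u, g u ∂(Measure.map (fun t => c * t) (volume.restrict (Ioi 0))) :=
        (hemb.lintegral_map g).symm
    _ = ENNReal.ofReal c⁻¹ * ∫⁻ u in Ioi (0:ℝ), g u := by
        rw [← hpre, ← Measure.restrict_map hemb.measurable measurableSet_Ioi,
          Real.map_volume_mul_left hc.ne', abs_inv, abs_of_pos hc, h1, hpre]

lemma finset_rpow_le (q : ℝ) (hq : 1 ≤ q) (F : Finset ℕ) (b : ℕ → ℝ≥0∞) :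
    ∑ i ∈ F, b i ^ q ≤ (∑ i ∈ F, b i) ^ q := by
  classical
  induction F using Finset.induction with
  | empty => simp [ENNReal.zero_rpow_of_pos (lt_of_lt_of_le one_pos hq)]
  | insert _ _ hx ih =>
    rw [Finset.sum_insert hx, Finset.sum_insert hx]
    calc _ ≤ _ ^ q + (∑ i ∈ _, b i) ^ q := add_le_add_right ih _
      _ ≤ _ := ENNReal.add_rpow_le_rpow_add _ _ hq

lemma tsum_rpow_le_of_le_one (lam : ℝ) (hlam : 0 < lam) (hlam1 : lam ≤ 1) (a : ℕ → ℝ≥0∞) :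
    (∑' k, a k) ^ lam ≤ ∑' k, a k ^ lam := by
  have h1 : ∑' k, a k ≤ (∑' k, a k ^ lam) ^ (1 / lam) := by
    rw [ENNReal.tsum_eq_iSup_sum]
    refine iSup_le fun F => ?_
    have : ∑ i ∈ F, a i = ∑ i ∈ F, (a i ^ lam) ^ (1/lam) := by
      refine Finset.sum_congr rfl fun i _ => ?_
      rw [← ENNReal.rpow_mul, mul_one_div, div_self hlam.ne', ENNReal.rpow_one]
    rw [this]
    calc ∑ i ∈ F, (a i ^ lam) ^ (1/lam)
        ≤ (∑ i ∈ F, a i ^ lam) ^ (1/lam) :=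
          finset_rpow_le _ ((one_le_div hlam).2 hlam1) _ _
      _ ≤ (∑' k, a k ^ lam) ^ (1/lam) := by
          gcongr
          exact ENNReal.sum_le_tsum F
  calc (∑' k, a k) ^ lam ≤ ((∑' k, a k ^ lam) ^ (1/lam)) ^ lam := by gcongr
    _ = ∑' k, a k ^ lam := by
        rw [← ENNReal.rpow_mul, one_div_mul_cancel hlam.ne', ENNReal.rpow_one]

/-- weighted sum bound, all `lam > 0`. -/
lemma tsum_rpow_bound (lam ε : ℝ) (hlam : 0 < lam) (hε : 0 < ε) :
    ∃ C : ℝ≥0∞, C ≠ ∞ ∧ ∀ a : ℕ → ℝ≥0∞,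
      (∑' k, a k) ^ lam ≤ C * ∑' (k:ℕ), (2:ℝ≥0∞) ^ (ε * lam * (k:ℝ)) * a k ^ lam := by
  rcases le_or_gt lam 1 with h1 | h1
  · refine ⟨1, one_ne_top, fun a => ?_⟩
    rw [one_mul]
    refine (tsum_rpow_le_of_le_one lam hlam h1 a).trans (ENNReal.tsum_le_tsum fun k => ?_)
    refine le_mul_of_one_le_left zero_le ?_
    calc (1:ℝ≥0∞) = 2 ^ (0:ℝ) := by rw [ENNReal.rpow_zero]
      _ ≤ 2 ^ (ε * lam * (k:ℝ)) := ENNReal.rpow_le_rpow_of_exponent_le one_le_two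
          (by positivity)
  · -- lam > 1 : Hölder with counting measure
    set p := lam.conjExponent with hp
    have hpq : p.HolderConjugate lam := (Real.HolderConjugate.conjExponent h1).symm
    have hppos : 0 < p := hpq.pos
    refine ⟨((1 - (2:ℝ≥0∞) ^ (-(ε * p))) ⁻¹) ^ (lam / p), ?_, fun a => ?_⟩
    · refine ENNReal.rpow_ne_top_of_nonneg (by positivity) ?_
      rw [Ne, ENNReal.inv_eq_top, tsub_eq_zero_iff_le]
      exact fun h => absurd (lt_of_le_of_lt h (ENNReal.rpow_lt_one_of_one_lt_of_neg
        one_lt_two (by nlinarith))) (lt_irrefl _)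
    · have key : ∑' k, a k ≤ ((∑' (k:ℕ), ((2:ℝ≥0∞) ^ (-(ε * (k:ℝ)))) ^ p) ^ (1/p)) *
          ((∑' (k:ℕ), ((2:ℝ≥0∞) ^ (ε * (k:ℝ)) * a k) ^ lam) ^ (1/lam)) := by
        have := ENNReal.lintegral_mul_le_Lp_mul_Lq (Measure.count (α := ℕ)) hpq
          (f := fun k => (2:ℝ≥0∞) ^ (-(ε * (k:ℝ)))) (g := fun k => (2:ℝ≥0∞) ^ (ε * (k:ℝ)) * a k)
          (Measurable.aemeasurable (by measurability)) (Measurable.aemeasurable (by measurability))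
        rw [lintegral_count, lintegral_count, lintegral_count] at this
        refine le_trans (le_of_eq ?_) this
        refine tsum_congr fun k => ?_
        show a k = (2:ℝ≥0∞) ^ (-(ε * (k:ℝ))) * ((2:ℝ≥0∞) ^ (ε * (k:ℝ)) * a k)
        rw [← mul_assoc, ← ENNReal.rpow_add _ _ two_ne_zero ofNat_ne_top]
        simp
      calc (∑' k, a k) ^ lam
          ≤ (((∑' (k:ℕ), ((2:ℝ≥0∞) ^ (-(ε * (k:ℝ)))) ^ p) ^ (1/p)) *
            ((∑' (k:ℕ), ((2:ℝ≥0∞) ^ (ε * (k:ℝ)) * a k) ^ lam) ^ (1/lam))) ^ lam := by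
            gcongr
        _ = ((1 - (2:ℝ≥0∞) ^ (-(ε * p))) ⁻¹) ^ (lam / p) *
            ∑' (k:ℕ), (2:ℝ≥0∞) ^ (ε * lam * (k:ℝ)) * a k ^ lam := by
            rw [ENNReal.mul_rpow_of_nonneg _ _ hlam.le, ← ENNReal.rpow_mul,
              ← ENNReal.rpow_mul, one_div_mul_cancel hlam.ne', ENNReal.rpow_one]
            congr 1
            · have e1 : ∀ k : ℕ, ((2:ℝ≥0∞) ^ (-(ε * (k:ℝ)))) ^ p
                  = ((2:ℝ≥0∞) ^ (-(ε * p))) ^ k := fun k => by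
                rw [← ENNReal.rpow_natCast ((2:ℝ≥0∞) ^ (-(ε * p))) k, ← ENNReal.rpow_mul,
                  ← ENNReal.rpow_mul]
                ring_nf
              rw [tsum_congr e1, ENNReal.tsum_geometric]
              congr 1
              ring
            · refine tsum_congr fun k => ?_
              rw [ENNReal.mul_rpow_of_nonneg _ _ hlam.le, ← ENNReal.rpow_mul]
              congr 2
              ring

lemma geom_ne_top (a b : ℝ) (ha : a < 0) : ∑' (k:ℕ), (2:ℝ≥0∞) ^ (a*(k:ℝ)+b) ≠ ∞ := by
  have e1 : ∀ k : ℕ, (2:ℝ≥0∞) ^ (a*(k:ℝ)+b) = (2:ℝ≥0∞) ^ b * ((2:ℝ≥0∞) ^ a) ^ k := fun k => by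
    rw [ENNReal.rpow_add _ _ two_ne_zero ofNat_ne_top, ← ENNReal.rpow_natCast ((2:ℝ≥0∞) ^ a) k,
      ← ENNReal.rpow_mul, mul_comm]
  rw [tsum_congr e1, ENNReal.tsum_mul_left, ENNReal.tsum_geometric]
  refine ENNReal.mul_ne_top (by simp) ?_
  rw [Ne, ENNReal.inv_eq_top, tsub_eq_zero_iff_le]
  exact fun h => absurd (lt_of_le_of_lt h (ENNReal.rpow_lt_one_of_one_lt_of_neg
    one_lt_two ha)) (lt_irrefl _)

lemma two_pow_ofReal (m : ℕ) : ENNReal.ofReal ((2:ℝ)^m) = (2:ℝ≥0∞)^(m:ℝ) := by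
  rw [← Real.rpow_natCast 2 m, ← ENNReal.ofReal_rpow_of_pos two_pos]
  norm_num

lemma inv_two_pow_rpow (m : ℕ) (y : ℝ) :
    (ENNReal.ofReal (((2:ℝ)^m)⁻¹)) ^ y = (2:ℝ≥0∞) ^ (-(m:ℝ)*y) := by
  rw [ENNReal.ofReal_inv_of_pos (by positivity), two_pow_ofReal, ← ENNReal.rpow_neg,
    ← ENNReal.rpow_mul]

lemma two_pow_rpow (m : ℕ) (y : ℝ) :
    (ENNReal.ofReal ((2:ℝ)^m)) ^ y = (2:ℝ≥0∞)^((m:ℝ)*y) := by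
  rw [two_pow_ofReal, ← ENNReal.rpow_mul]

lemma cover_lt {t : ℝ} (ht : 0 < t) :
    Ioc (0:ℝ) t ⊆ ⋃ k : ℕ, Ioc ((((2:ℝ)^(k+1))⁻¹) * t) (2 * ((((2:ℝ)^(k+1))⁻¹) * t)) := by
  intro s hs
  have hs0 : 0 < s := hs.1
  obtain ⟨n, hn1, hn2⟩ := exists_mem_Ico_zpow (x := t/s) (y := 2) (div_pos ht hs0) one_lt_two
  have hts : (1:ℝ) ≤ t/s := (one_le_div hs0).2 hs.2
  have hn0 : 0 ≤ n := by
    by_contra h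
    push_neg at h
    have h1 : n + 1 ≤ 0 := by omega
    have : (2:ℝ)^(n+1) ≤ 2^(0:ℤ) := zpow_le_zpow_right₀ one_le_two h1
    simp only [zpow_zero] at this
    linarith
  lift n to ℕ using hn0 with k
  have hk1 : (2:ℝ)^(k:ℤ) = 2^k := by norm_num
  have hk2 : (2:ℝ)^((k:ℤ)+1) = 2^(k+1) := by
    rw [show ((k:ℤ)+1) = ((k+1:ℕ):ℤ) by push_cast; ring, zpow_natCast]
  rw [hk1] at hn1
  rw [hk2] at hn2
  have hp1 : (0:ℝ) < 2^k := by positivity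
  have hp2 : (0:ℝ) < 2^(k+1) := by positivity
  refine mem_iUnion.2 ⟨k, ?_, ?_⟩
  · -- (2^(k+1))⁻¹ * t < s
    rw [div_lt_iff₀ hs0] at hn2
    rw [inv_mul_eq_div, div_lt_iff₀ hp2]
    linarith [hn2]
  · -- s ≤ 2 * ((2^(k+1))⁻¹ * t)
    rw [le_div_iff₀ hs0] at hn1
    have he : 2 * (((2:ℝ)^(k+1))⁻¹ * t) = t / 2^k := by
      rw [pow_succ]
      field_simp
    rw [he, le_div_iff₀ hp1]
    linarith [hn1]

lemma cover_gt {t : ℝ} (ht : 0 < t) :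
    Ioi t ⊆ ⋃ k : ℕ, Ioc (((2:ℝ)^k) * t) (2 * (((2:ℝ)^k) * t)) := by
  intro s hs
  have hs0 : 0 < s := lt_trans ht hs
  have hx : (1:ℝ) < s/t := (one_lt_div ht).2 hs
  obtain ⟨n, hn1, hn2⟩ := exists_mem_Ioc_zpow (x := s/t) (y := 2) (div_pos hs0 ht) one_lt_two
  have hn0 : 0 ≤ n := by
    by_contra h
    push_neg at h
    have h1 : n + 1 ≤ 0 := by omega
    have : (2:ℝ)^(n+1) ≤ 2^(0:ℤ) := zpow_le_zpow_right₀ one_le_two h1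
    simp only [zpow_zero] at this
    linarith
  lift n to ℕ using hn0 with k
  have hk1 : (2:ℝ)^(k:ℤ) = 2^k := by norm_num
  have hk2 : (2:ℝ)^((k:ℤ)+1) = 2^(k+1) := by
    rw [show ((k:ℤ)+1) = ((k+1:ℕ):ℤ) by push_cast; ring, zpow_natCast]
  rw [hk1] at hn1
  rw [hk2] at hn2
  refine mem_iUnion.2 ⟨k, ?_, ?_⟩
  · -- 2^k * t < s
    rw [lt_div_iff₀ ht] at hn1
    linarith
  · -- s ≤ 2 * (2^k * t)
    rw [div_le_iff₀ ht] at hn2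
    rw [← mul_assoc, ← pow_succ']
    linarith

lemma ofReal_rpow_ne_top {x : ℝ} (hx : 0 < x) (y : ℝ) : (ENNReal.ofReal x) ^ y ≠ ⊤ := by
  simp [ENNReal.rpow_eq_top_iff, (ENNReal.ofReal_pos.2 hx).ne', ENNReal.ofReal_ne_top]

theorem key (β lam ε E : ℝ) (hβ : 0 ≤ β) (hlam : 0 < lam) (hε : 0 < ε)
    (c : ℕ → ℝ) (hc : ∀ k, 0 < c k)
    (hS : ∑' (k:ℕ), (2:ℝ≥0∞) ^ (ε * lam * (k:ℝ)) * (ENNReal.ofReal (c k)) ^ (-(E+1)) ≠ ∞) :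
    ∃ C : ℝ≥0∞, C ≠ ∞ ∧ ∀ (r : ℝ → ℝ) (dom : ℝ → Set ℝ),
      AntitoneOn r (Ioi 0) → (∀ t > (0:ℝ), 0 < r t) →
      (∀ t ∈ Ioi (0:ℝ), dom t ⊆ ⋃ k : ℕ, Ioc (c k * t) (2 * (c k * t))) →
    ∫⁻ t in Ioi (0:ℝ), (∫⁻ s in dom t, ENNReal.ofReal (s ^ β * r s)) ^ lam * (ENNReal.ofReal t) ^ E
      ≤ C * ∫⁻ u in Ioi (0:ℝ),
          (ENNReal.ofReal (r u)) ^ lam * (ENNReal.ofReal u) ^ (lam*(β+1) + E) := by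
  obtain ⟨CH, hCHtop, hCH⟩ := tsum_rpow_bound lam ε hlam hε
  refine ⟨CH * (ENNReal.ofReal (2 ^ β)) ^ lam *
    ∑' (k:ℕ), (2:ℝ≥0∞) ^ (ε * lam * (k:ℝ)) * (ENNReal.ofReal (c k)) ^ (-(E+1)),
    ENNReal.mul_ne_top (ENNReal.mul_ne_top hCHtop
      (ENNReal.rpow_ne_top_of_nonneg hlam.le ofReal_ne_top)) hS,
    fun r dom hr hrpos hdom => ?_⟩
  set J := ∫⁻ u in Ioi (0:ℝ),
      (ENNReal.ofReal (r u)) ^ lam * (ENNReal.ofReal u) ^ (lam*(β+1) + E) with hJ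
  set b : ℕ → ℝ → ℝ≥0∞ := fun k t =>
    ENNReal.ofReal ((2*(c k * t)) ^ β * r (c k * t)) * ENNReal.ofReal (c k * t) with hb
  -- step 1-2 : pointwise bound on inner integral
  have hT : ∀ t ∈ Ioi (0:ℝ),
      (∫⁻ s in dom t, ENNReal.ofReal (s ^ β * r s)) ≤ ∑' k, b k t := by
    intro t ht
    calc ∫⁻ s in dom t, ENNReal.ofReal (s ^ β * r s)
        ≤ ∫⁻ s in ⋃ k : ℕ, Ioc (c k * t) (2 * (c k * t)), ENNReal.ofReal (s ^ β * r s) :=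
          lintegral_mono_set (hdom t ht)
      _ ≤ ∑' k, ∫⁻ s in Ioc (c k * t) (2 * (c k * t)), ENNReal.ofReal (s ^ β * r s) :=
          lintegral_iUnion_le _ _
      _ ≤ ∑' k, b k t := by
          refine ENNReal.tsum_le_tsum fun k => ?_
          have hckt : 0 < c k * t := mul_pos (hc k) ht
          calc ∫⁻ s in Ioc (c k * t) (2 * (c k * t)), ENNReal.ofReal (s ^ β * r s)
              ≤ ∫⁻ _ in Ioc (c k * t) (2 * (c k * t)),
                  ENNReal.ofReal ((2*(c k * t)) ^ β * r (c k * t)) := by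
                refine setLIntegral_mono measurable_const fun s hs => ?_
                refine ENNReal.ofReal_le_ofReal ?_
                have hs0 : 0 < s := lt_trans hckt hs.1
                refine mul_le_mul ?_ ?_ (hrpos s hs0).le (Real.rpow_nonneg (by linarith) _)
                · exact Real.rpow_le_rpow hs0.le hs.2 hβ
                · exact hr hckt hs0 hs.1.le
            _ = b k t := by
                rw [setLIntegral_const, hb, Real.volume_Ioc]
                norm_num
                ring_nf
  -- step 4-5 : bound the whole integral
  have hstep5 : ∫⁻ t in Ioi (0:ℝ),
        (∫⁻ s in dom t, ENNReal.ofReal (s ^ β * r s)) ^ lam * (ENNReal.ofReal t) ^ E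
      ≤ ∫⁻ t in Ioi (0:ℝ),
          CH * ∑' (k:ℕ), (2:ℝ≥0∞) ^ (ε * lam * (k:ℝ)) * (b k t) ^ lam
            * (ENNReal.ofReal t) ^ E := by
    refine lintegral_mono_ae (((ae_restrict_iff' measurableSet_Ioi).2 (ae_of_all _
      fun t ht => ?_)))
    calc (∫⁻ s in dom t, ENNReal.ofReal (s ^ β * r s)) ^ lam * (ENNReal.ofReal t) ^ E
        ≤ (∑' k, b k t) ^ lam * (ENNReal.ofReal t) ^ E := by
          gcongr
          exact hT t ht
      _ ≤ (CH * ∑' (k:ℕ), (2:ℝ≥0∞) ^ (ε * lam * (k:ℝ)) * (b k t) ^ lam)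
            * (ENNReal.ofReal t) ^ E := by
          gcongr
          exact hCH (fun k => b k t)
      _ = CH * ∑' (k:ℕ), (2:ℝ≥0∞) ^ (ε * lam * (k:ℝ)) * (b k t) ^ lam
            * (ENNReal.ofReal t) ^ E := by
          rw [mul_assoc, ← ENNReal.tsum_mul_right]
  -- measurability of per-k integrands
  have hrk : ∀ k : ℕ, AEMeasurable (fun t => r (c k * t)) (volume.restrict (Ioi (0:ℝ))) := by
    intro k
    refine aemeasurable_restrict_of_antitoneOn measurableSet_Ioi ?_
    intro x hx y hy hxy
    exact hr (mul_pos (hc k) hx) (mul_pos (hc k) hy)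
      (mul_le_mul_of_nonneg_left hxy (hc k).le)
  have hbk : ∀ k : ℕ, AEMeasurable (b k) (volume.restrict (Ioi (0:ℝ))) := by
    intro k
    refine AEMeasurable.mul (M := ℝ≥0∞) ?_ ?_
    · refine ENNReal.measurable_ofReal.comp_aemeasurable (AEMeasurable.mul ?_ (hrk k))
      exact ((measurable_id'.const_mul (c k)).const_mul 2 |>.pow measurable_const).aemeasurable
    · exact (ENNReal.measurable_ofReal.comp (measurable_id'.const_mul (c k))).aemeasurable
  have hmk : ∀ k : ℕ, AEMeasurable
      (fun t => (2:ℝ≥0∞) ^ (ε * lam * (k:ℝ)) * (b k t) ^ lam * (ENNReal.ofReal t) ^ E)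
      (volume.restrict (Ioi (0:ℝ))) := by
    intro k
    refine (((hbk k).pow aemeasurable_const).const_mul _).mul ?_
    exact (ENNReal.measurable_ofReal.pow measurable_const).aemeasurable
  -- step 6 : swap sum and integral
  have hstep6 : ∫⁻ t in Ioi (0:ℝ),
        CH * ∑' (k:ℕ), (2:ℝ≥0∞) ^ (ε * lam * (k:ℝ)) * (b k t) ^ lam
          * (ENNReal.ofReal t) ^ E
      = CH * ∑' (k:ℕ), ∫⁻ t in Ioi (0:ℝ),
          (2:ℝ≥0∞) ^ (ε * lam * (k:ℝ)) * (b k t) ^ lam * (ENNReal.ofReal t) ^ E := by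
    rw [lintegral_const_mul' _ _ hCHtop, lintegral_tsum hmk]
  -- step 7-8 : evaluate each term by scaling substitution
  have hterm : ∀ k : ℕ, ∫⁻ t in Ioi (0:ℝ),
        (2:ℝ≥0∞) ^ (ε * lam * (k:ℝ)) * (b k t) ^ lam * (ENNReal.ofReal t) ^ E
      ≤ (2:ℝ≥0∞) ^ (ε * lam * (k:ℝ)) * (ENNReal.ofReal (c k)) ^ (-(E+1))
          * (ENNReal.ofReal (2 ^ β)) ^ lam * J := by
    intro k
    set g : ℝ → ℝ≥0∞ := fun u => ENNReal.ofReal ((2*u) ^ β * r u) ^ lam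
        * ENNReal.ofReal u ^ lam * ENNReal.ofReal (u / c k) ^ E with hg
    have hbg : ∀ t : ℝ, (b k t) ^ lam * (ENNReal.ofReal t) ^ E = g (c k * t) := by
      intro t
      rw [hg, hb]
      simp only []
      rw [ENNReal.mul_rpow_of_nonneg _ _ hlam.le, mul_div_cancel_left₀ _ (hc k).ne']
    have hscale : ∫⁻ t in Ioi (0:ℝ), g (c k * t)
        = ENNReal.ofReal (c k)⁻¹ * ∫⁻ u in Ioi (0:ℝ), g u := lint_scale _ (hc k) g
    have hgle : ∫⁻ u in Ioi (0:ℝ), g u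
        ≤ (ENNReal.ofReal (c k)) ^ (-E) * ((ENNReal.ofReal (2 ^ β)) ^ lam * J) := by
      rw [hJ, ← mul_assoc, ← lintegral_const_mul' _ _ (ENNReal.mul_ne_top
        (ofReal_rpow_ne_top (hc k) _) (ofReal_rpow_ne_top (by positivity) _))]
      refine lintegral_mono_ae (((ae_restrict_iff' measurableSet_Ioi).2 (ae_of_all _
        fun u hu => ?_)))
      have hu : (0:ℝ) < u := hu
      have eβ : ENNReal.ofReal (u ^ β) ^ lam = ENNReal.ofReal u ^ (β * lam) := by
        rw [← ENNReal.ofReal_rpow_of_pos hu, ← ENNReal.rpow_mul]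
      have e1 : ENNReal.ofReal ((2*u) ^ β * r u) ^ lam
          = (ENNReal.ofReal (2 ^ β)) ^ lam * (ENNReal.ofReal u) ^ (β * lam)
            * (ENNReal.ofReal (r u)) ^ lam := by
        rw [Real.mul_rpow (by norm_num) hu.le, ENNReal.ofReal_mul (by positivity),
          ENNReal.ofReal_mul (by positivity), ENNReal.mul_rpow_of_nonneg _ _ hlam.le,
          ENNReal.mul_rpow_of_nonneg _ _ hlam.le, eβ]
      have e2 : ENNReal.ofReal (u / c k) ^ E
          = (ENNReal.ofReal u) ^ E * (ENNReal.ofReal (c k)) ^ (-E) := by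
        rw [div_eq_mul_inv, ENNReal.ofReal_mul hu.le, ENNReal.ofReal_inv_of_pos (hc k),
          ENNReal.mul_rpow_of_ne_zero ?x1 ?x2, ENNReal.inv_rpow, ← ENNReal.rpow_neg]
        case x1 => exact (ENNReal.ofReal_pos.2 hu).ne'
        case x2 => exact ENNReal.inv_ne_zero.2 ofReal_ne_top
      refine le_of_eq ?_
      rw [hg]
      simp only []
      rw [e1, e2]
      have e3 : (ENNReal.ofReal u) ^ (β * lam) * (ENNReal.ofReal u) ^ lam
          * (ENNReal.ofReal u) ^ E = (ENNReal.ofReal u) ^ (lam*(β+1) + E) := by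
        rw [← ENNReal.rpow_add _ _ (ENNReal.ofReal_pos.2 hu).ne' ofReal_ne_top,
          ← ENNReal.rpow_add _ _ (ENNReal.ofReal_pos.2 hu).ne' ofReal_ne_top]
        ring_nf
      calc (ENNReal.ofReal (2 ^ β)) ^ lam * (ENNReal.ofReal u) ^ (β * lam)
            * (ENNReal.ofReal (r u)) ^ lam * (ENNReal.ofReal u) ^ lam
            * ((ENNReal.ofReal u) ^ E * (ENNReal.ofReal (c k)) ^ (-E))
          = (ENNReal.ofReal (c k)) ^ (-E) * (ENNReal.ofReal (2 ^ β)) ^ lam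
            * ((ENNReal.ofReal (r u)) ^ lam
              * ((ENNReal.ofReal u) ^ (β * lam) * (ENNReal.ofReal u) ^ lam
                * (ENNReal.ofReal u) ^ E)) := by ring
        _ = _ := by rw [e3]
    calc ∫⁻ t in Ioi (0:ℝ),
          (2:ℝ≥0∞) ^ (ε * lam * (k:ℝ)) * (b k t) ^ lam * (ENNReal.ofReal t) ^ E
        = (2:ℝ≥0∞) ^ (ε * lam * (k:ℝ)) * ∫⁻ t in Ioi (0:ℝ), g (c k * t) := by
          rw [← lintegral_const_mul' _ _ (by
            exact ENNReal.rpow_ne_top_of_nonneg (by positivity) ofNat_ne_top)]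
          congr 1
          funext t
          rw [mul_assoc, hbg t]
      _ = (2:ℝ≥0∞) ^ (ε * lam * (k:ℝ)) * (ENNReal.ofReal (c k)⁻¹ * ∫⁻ u in Ioi (0:ℝ), g u) := by
          rw [hscale]
      _ ≤ (2:ℝ≥0∞) ^ (ε * lam * (k:ℝ)) * (ENNReal.ofReal (c k)⁻¹
            * ((ENNReal.ofReal (c k)) ^ (-E) * ((ENNReal.ofReal (2 ^ β)) ^ lam * J))) := by
          gcongr
      _ = (2:ℝ≥0∞) ^ (ε * lam * (k:ℝ)) * (ENNReal.ofReal (c k)) ^ (-(E+1))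
            * (ENNReal.ofReal (2 ^ β)) ^ lam * J := by
          rw [ENNReal.ofReal_inv_of_pos (hc k), ← ENNReal.rpow_neg_one (ENNReal.ofReal (c k))]
          have e4 : (ENNReal.ofReal (c k)) ^ (-1:ℝ) * (ENNReal.ofReal (c k)) ^ (-E)
              = (ENNReal.ofReal (c k)) ^ (-(E+1)) := by
            rw [← ENNReal.rpow_add _ _ (ENNReal.ofReal_pos.2 (hc k)).ne' ofReal_ne_top]
            ring_nf
          calc (2:ℝ≥0∞) ^ (ε * lam * (k:ℝ)) * ((ENNReal.ofReal (c k)) ^ (-1:ℝ)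
                * ((ENNReal.ofReal (c k)) ^ (-E) * ((ENNReal.ofReal (2 ^ β)) ^ lam * J)))
              = (ENNReal.ofReal (c k)) ^ (-1:ℝ) * (ENNReal.ofReal (c k)) ^ (-E)
                * ((2:ℝ≥0∞) ^ (ε * lam * (k:ℝ)) * ((ENNReal.ofReal (2 ^ β)) ^ lam * J)) := by
                ring
            _ = _ := by rw [e4]; ring
  -- conclusion
  calc _ ≤ _ := hstep5
    _ = _ := hstep6
    _ ≤ CH * ∑' (k:ℕ), (2:ℝ≥0∞) ^ (ε * lam * (k:ℝ)) * (ENNReal.ofReal (c k)) ^ (-(E+1))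
            * (ENNReal.ofReal (2 ^ β)) ^ lam * J := by
          gcongr
          exact hterm _
    _ = _ := by
          have hre : ∑' (k:ℕ), (2:ℝ≥0∞) ^ (ε * lam * (k:ℝ)) * (ENNReal.ofReal (c k)) ^ (-(E+1))
                * (ENNReal.ofReal (2 ^ β)) ^ lam * J
              = (ENNReal.ofReal (2 ^ β)) ^ lam *
                ((∑' (k:ℕ), (2:ℝ≥0∞) ^ (ε * lam * (k:ℝ)) * (ENNReal.ofReal (c k)) ^ (-(E+1))) * J) := by
            rw [← ENNReal.tsum_mul_right, ← ENNReal.tsum_mul_left]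
            exact tsum_congr fun k => by ring
          rw [hre]
          ring

/-- pointwise lower bound for the inner integral over `Ioc a b` by its value at endpoints -/
lemma inner_lower (β : ℝ) (hβ : 0 ≤ β) (r : ℝ → ℝ) (hr : AntitoneOn r (Ioi 0))
    (hrpos : ∀ t > (0:ℝ), 0 < r t) {a b : ℝ} (ha : 0 < a) (hab : a ≤ b) :
    ENNReal.ofReal (a ^ β * r b) * ENNReal.ofReal (b - a)
      ≤ ∫⁻ s in Ioc a b, ENNReal.ofReal (s ^ β * r s) := by
  have : ENNReal.ofReal (a ^ β * r b) * ENNReal.ofReal (b - a)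
      = ∫⁻ _ in Ioc a b, ENNReal.ofReal (a ^ β * r b) := by
    rw [setLIntegral_const, Real.volume_Ioc]
  rw [this]
  refine lintegral_mono_ae ((ae_restrict_iff' measurableSet_Ioc).2 (ae_of_all _ fun s hs => ?_))
  refine ENNReal.ofReal_le_ofReal ?_
  have hs0 : 0 < s := lt_of_lt_of_le ha hs.1.le
  have hb0 : 0 < b := lt_of_lt_of_le ha hab
  refine mul_le_mul (Real.rpow_le_rpow ha.le hs.1.le hβ) (hr hs0 hb0 hs.2)
    (hrpos b hb0).le (Real.rpow_nonneg hs0.le _)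

lemma revB_lt (β lam E : ℝ) (hβ : 0 ≤ β) (hlam : 0 < lam)
    (r : ℝ → ℝ) (hr : AntitoneOn r (Ioi 0)) (hrpos : ∀ t > (0:ℝ), 0 < r t) :
    ∫⁻ u in Ioi (0:ℝ), (ENNReal.ofReal (r u)) ^ lam * (ENNReal.ofReal u) ^ (lam*(β+1) + E)
      ≤ (ENNReal.ofReal ((2:ℝ) ^ (β+1))) ^ lam *
        ∫⁻ t in Ioi (0:ℝ),
          (∫⁻ s in Ioc (0:ℝ) t, ENNReal.ofReal (s ^ β * r s)) ^ lam * (ENNReal.ofReal t) ^ E := by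
  rw [← lintegral_const_mul' _ _ (ofReal_rpow_ne_top (by positivity) _)]
  refine lintegral_mono_ae ((ae_restrict_iff' measurableSet_Ioi).2 (ae_of_all _ fun u hu => ?_))
  have hu : (0:ℝ) < u := hu
  have h2 : (0:ℝ) < u/2 := by linarith
  have hlow : ENNReal.ofReal ((u/2) ^ β * r u) * ENNReal.ofReal (u - u/2)
      ≤ ∫⁻ s in Ioc (u/2) u, ENNReal.ofReal (s ^ β * r s) :=
    inner_lower β hβ r hr hrpos h2 (by linarith)
  have hsub : (∫⁻ s in Ioc (u/2) u, ENNReal.ofReal (s ^ β * r s))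
      ≤ ∫⁻ s in Ioc (0:ℝ) u, ENNReal.ofReal (s ^ β * r s) :=
    lintegral_mono_set (fun s hs => ⟨lt_trans h2 hs.1, hs.2⟩)
  have heq : (ENNReal.ofReal ((2:ℝ) ^ (β+1))) ^ lam *
      ((ENNReal.ofReal ((u/2) ^ β * r u) * ENNReal.ofReal (u - u/2)) ^ lam
        * (ENNReal.ofReal u) ^ E)
      = (ENNReal.ofReal (r u)) ^ lam * (ENNReal.ofReal u) ^ (lam*(β+1) + E) := by
    have e0 : u - u/2 = u/2 := by ring
    have e1 : (u/2) ^ β * r u * (u/2) = u ^ β * u * r u * ((2:ℝ) ^ (β+1))⁻¹ := by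
      rw [Real.div_rpow hu.le (by norm_num : (0:ℝ) ≤ 2)]
      rw [show (β+1) = β + 1 from rfl, Real.rpow_add two_pos, Real.rpow_one]
      field_simp
    have hrnn : 0 ≤ r u := (hrpos u hu).le
    rw [e0, ← ENNReal.ofReal_mul (mul_nonneg (Real.rpow_nonneg h2.le _) hrnn), e1]
    rw [ENNReal.ofReal_mul (mul_nonneg (mul_nonneg (Real.rpow_nonneg hu.le _) hu.le) hrnn),
      ENNReal.mul_rpow_of_nonneg _ _ hlam.le]
    rw [ENNReal.ofReal_inv_of_pos (by positivity : (0:ℝ) < (2:ℝ)^(β+1))]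
    rw [ENNReal.inv_rpow]
    rw [show ∀ A B C D : ℝ≥0∞, A * (B * C⁻¹ * D) = (A * C⁻¹) * (B * D) from fun A B C D => by
      ring]
    rw [ENNReal.mul_inv_cancel (by
        exact (ENNReal.rpow_pos (ENNReal.ofReal_pos.2 (by positivity)) ofReal_ne_top).ne')
      (ofReal_rpow_ne_top (by positivity) _), one_mul]
    rw [ENNReal.ofReal_mul (by positivity), ENNReal.ofReal_mul (by positivity)]
    rw [ENNReal.mul_rpow_of_nonneg _ _ hlam.le, ENNReal.mul_rpow_of_nonneg _ _ hlam.le]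
    have eβ : ENNReal.ofReal (u ^ β) ^ lam = ENNReal.ofReal u ^ (β * lam) := by
      rw [← ENNReal.ofReal_rpow_of_pos hu, ← ENNReal.rpow_mul]
    rw [eβ]
    have e3 : (ENNReal.ofReal u) ^ (β * lam) * (ENNReal.ofReal u) ^ lam
        * (ENNReal.ofReal u) ^ E = (ENNReal.ofReal u) ^ (lam*(β+1) + E) := by
      rw [← ENNReal.rpow_add _ _ (ENNReal.ofReal_pos.2 hu).ne' ofReal_ne_top,
        ← ENNReal.rpow_add _ _ (ENNReal.ofReal_pos.2 hu).ne' ofReal_ne_top]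
      ring_nf
    calc ENNReal.ofReal u ^ (β*lam) * ENNReal.ofReal u ^ lam * ENNReal.ofReal (r u) ^ lam
          * ENNReal.ofReal u ^ E
        = ENNReal.ofReal (r u) ^ lam * (ENNReal.ofReal u ^ (β*lam) * ENNReal.ofReal u ^ lam
            * ENNReal.ofReal u ^ E) := by ring
      _ = _ := by rw [e3]
  calc (ENNReal.ofReal (r u)) ^ lam * (ENNReal.ofReal u) ^ (lam*(β+1) + E)
      = (ENNReal.ofReal ((2:ℝ) ^ (β+1))) ^ lam *
        ((ENNReal.ofReal ((u/2) ^ β * r u) * ENNReal.ofReal (u - u/2)) ^ lam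
          * (ENNReal.ofReal u) ^ E) := heq.symm
    _ ≤ _ := by
        gcongr
        exact hlow.trans hsub

lemma two_rpow_ne_top (M : ℝ) : ((2:ℝ≥0∞) ^ M) ≠ ⊤ := by
  rw [show (2:ℝ≥0∞) = ENNReal.ofReal 2 by norm_num]
  exact ofReal_rpow_ne_top two_pos M

lemma revB_gt (β lam E : ℝ) (hβ : 0 ≤ β) (hlam : 0 < lam) :
    ∃ K : ℝ≥0∞, K ≠ ⊤ ∧ ∀ (r : ℝ → ℝ),
      AntitoneOn r (Ioi 0) → (∀ t > (0:ℝ), 0 < r t) →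
    ∫⁻ u in Ioi (0:ℝ), (ENNReal.ofReal (r u)) ^ lam * (ENNReal.ofReal u) ^ (lam*(β+1) + E)
      ≤ K * ∫⁻ t in Ioi (0:ℝ),
          (∫⁻ s in Ioi t, ENNReal.ofReal (s ^ β * r s)) ^ lam * (ENNReal.ofReal t) ^ E := by
  classical
  have h2 : (ENNReal.ofReal 2⁻¹) ≠ 0 := (ENNReal.ofReal_pos.2 (by norm_num)).ne'
  refine ⟨(ENNReal.ofReal 2⁻¹)⁻¹ * (2:ℝ≥0∞) ^ (lam*(β+1) + E), ENNReal.mul_ne_top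
    (ENNReal.inv_ne_top.2 h2) (two_rpow_ne_top _), fun r hr hrpos => ?_⟩
  set M := lam*(β+1) + E with hM
  set F : ℝ → ℝ≥0∞ := fun u => (ENNReal.ofReal (r u)) ^ lam * (ENNReal.ofReal u) ^ M with hF
  have hscale := lint_scale 2 two_pos F
  have hJ2 : ∫⁻ u in Ioi (0:ℝ), F u
      = (ENNReal.ofReal 2⁻¹)⁻¹ * ∫⁻ t in Ioi (0:ℝ), F (2*t) := by
    rw [hscale, ← mul_assoc, ENNReal.inv_mul_cancel h2 ofReal_ne_top, one_mul]
  rw [show ∫⁻ u in Ioi (0:ℝ), (ENNReal.ofReal (r u)) ^ lam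
        * (ENNReal.ofReal u) ^ (lam*(β+1) + E) = ∫⁻ u in Ioi (0:ℝ), F u from rfl, hJ2,
    mul_assoc]
  gcongr
  rw [← lintegral_const_mul' _ _ (two_rpow_ne_top M)]
  refine lintegral_mono_ae ((ae_restrict_iff' measurableSet_Ioi).2 (ae_of_all _ fun t ht => ?_))
  have ht : (0:ℝ) < t := ht
  have hrnn : 0 ≤ r (2*t) := (hrpos _ (by linarith)).le
  have hlow : ENNReal.ofReal (t ^ β * r (2*t)) * ENNReal.ofReal (2*t - t)
      ≤ ∫⁻ s in Ioc t (2*t), ENNReal.ofReal (s ^ β * r s) :=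
    inner_lower β hβ r hr hrpos ht (by linarith)
  have hsub : (∫⁻ s in Ioc t (2*t), ENNReal.ofReal (s ^ β * r s))
      ≤ ∫⁻ s in Ioi t, ENNReal.ofReal (s ^ β * r s) :=
    lintegral_mono_set (fun s hs => hs.1)
  have heq : F (2*t) = (2:ℝ≥0∞) ^ M *
      ((ENNReal.ofReal (t ^ β * r (2*t)) * ENNReal.ofReal (2*t - t)) ^ lam
        * (ENNReal.ofReal t) ^ E) := by
    have e0 : 2*t - t = t := by ring
    rw [hF]
    simp only []
    rw [e0, ENNReal.ofReal_mul (Real.rpow_nonneg ht.le _),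
      ENNReal.mul_rpow_of_nonneg _ _ hlam.le, ENNReal.mul_rpow_of_nonneg _ _ hlam.le]
    have eβ : ENNReal.ofReal (t ^ β) ^ lam = ENNReal.ofReal t ^ (β * lam) := by
      rw [← ENNReal.ofReal_rpow_of_pos ht, ← ENNReal.rpow_mul]
    have e2t : (ENNReal.ofReal (2*t)) ^ M = (2:ℝ≥0∞) ^ M * (ENNReal.ofReal t) ^ M := by
      rw [ENNReal.ofReal_mul (by norm_num : (0:ℝ) ≤ 2),
        ENNReal.mul_rpow_of_ne_zero (by norm_num) (ENNReal.ofReal_pos.2 ht).ne']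
      norm_num
    have e3 : (ENNReal.ofReal t) ^ (β * lam) * (ENNReal.ofReal t) ^ lam
        * (ENNReal.ofReal t) ^ E = (ENNReal.ofReal t) ^ M := by
      rw [← ENNReal.rpow_add _ _ (ENNReal.ofReal_pos.2 ht).ne' ofReal_ne_top,
        ← ENNReal.rpow_add _ _ (ENNReal.ofReal_pos.2 ht).ne' ofReal_ne_top, hM]
      ring_nf
    rw [eβ, e2t, ← e3]
    ring
  rw [heq]
  gcongr
  exact hlow.trans hsub


lemma intOn_Ioc (β : ℝ) (hβ : 0 ≤ β) (r : ℝ → ℝ) (hr : AntitoneOn r (Ioi 0))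
    (hrpos : ∀ t > (0:ℝ), 0 < r t) {a b : ℝ} (ha : 0 < a) :
    IntegrableOn (fun s => s ^ β * r s) (Ioc a b) volume := by
  rcases le_or_gt b a with h | h
  · rw [Ioc_eq_empty (not_lt.2 h)]
    exact integrableOn_empty
  · have hASM : AEStronglyMeasurable (fun s => s ^ β * r s) (volume.restrict (Ioi (0:ℝ))) :=
      ((measurable_id'.pow measurable_const).aemeasurable.mul
        (aemeasurable_restrict_of_antitoneOn measurableSet_Ioi hr)).aestronglyMeasurable
    have h1 : IntegrableOn (fun s => s ^ β * r s) (Ioc a b) (volume.restrict (Ioi 0)) := by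
      refine Measure.integrableOn_of_bounded (M := b ^ β * r a) ?_ hASM ?_
      · exact ((Measure.restrict_apply_le _ _).trans_lt measure_Ioc_lt_top).ne
      · refine (ae_restrict_iff' measurableSet_Ioc).2 (ae_of_all _ fun s hs => ?_)
        have hs0 : 0 < s := lt_trans ha hs.1
        rw [Real.norm_eq_abs, abs_of_nonneg (mul_nonneg (Real.rpow_nonneg hs0.le _)
          (hrpos s hs0).le)]
        refine mul_le_mul (Real.rpow_le_rpow hs0.le hs.2 hβ) (hr ha hs0 hs.1.le)
          (hrpos s hs0).le (Real.rpow_nonneg (by linarith) _)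
    have hsub : Ioc a b ∩ Ioi 0 = Ioc a b :=
      inter_eq_left.2 fun s hs => lt_trans ha hs.1
    rwa [IntegrableOn, Measure.restrict_restrict measurableSet_Ioc, hsub] at h1

/-- Hardy-type inequality for decreasing functions. -/
theorem stmt_11 (β δ lam : ℝ) (hβ : 0 ≤ β) (hδ : δ ≠ 1) (hlam : 0 < lam) :
    ∃ C > (0 : ℝ), ∀ r R : ℝ → ℝ,
      (∀ t > (0 : ℝ), 0 < r t) →
      (AntitoneOn r (Ioi (0 : ℝ))) →
      (δ < 1 → ∀ t > (0 : ℝ), R t = ∫ s in (0 : ℝ)..t, s ^ β * r s) →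
      (1 < δ → ∀ t > (0 : ℝ), R t = ∫ s in Ioi t, s ^ β * r s) →
      (∫ t in Ioi (0 : ℝ), (R t / t) ^ lam * t ^ (δ * lam) / t)
        ≤ C * ∫ t in Ioi (0 : ℝ), r t ^ lam * t ^ (lam * (β + δ)) / t := by
  set E := δ * lam - lam - 1 with hE
  rcases lt_or_gt_of_ne hδ with hδ1 | hδ1
  · -- case δ < 1
    set ε := (1 - δ)/2 with hεdef
    have hε : 0 < ε := by rw [hεdef]; linarith
    set c : ℕ → ℝ := fun k => ((2:ℝ)^(k+1))⁻¹ with hcdef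
    have hc : ∀ k, 0 < c k := fun k => by rw [hcdef]; positivity
    have hS : ∑' (k:ℕ), (2:ℝ≥0∞) ^ (ε * lam * (k:ℝ)) * (ENNReal.ofReal (c k)) ^ (-(E+1)) ≠ ⊤ := by
      have e : ∀ k:ℕ, (2:ℝ≥0∞) ^ (ε * lam * (k:ℝ)) * (ENNReal.ofReal (c k)) ^ (-(E+1))
          = (2:ℝ≥0∞) ^ ((ε*lam + (E+1)) * (k:ℝ) + (E+1)) := by
        intro k
        rw [hcdef]
        simp only []
        rw [inv_two_pow_rpow (k+1) (-(E+1)), ← ENNReal.rpow_add _ _ two_ne_zero ofNat_ne_top]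
        congr 1
        push_cast
        ring
      rw [tsum_congr e]
      refine geom_ne_top _ _ ?_
      have h1 : ε * lam + (E + 1) = lam * (δ - 1) / 2 := by rw [hεdef, hE]; ring
      rw [h1]
      have := mul_pos hlam (by linarith : (0:ℝ) < 1 - δ)
      nlinarith
    obtain ⟨CA, hCAtop, hkey⟩ := key β lam ε E hβ hlam hε c hc hS
    refine ⟨max CA.toReal 1, lt_of_lt_of_le one_pos (le_max_right _ _), ?_⟩
    intro r R hrpos hr hRlt _
    have hRdef := hRlt hδ1
    have hrA : AEMeasurable r (volume.restrict (Ioi (0:ℝ))) :=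
      aemeasurable_restrict_of_antitoneOn measurableSet_Ioi hr
    have hΨnn : ∀ t ∈ Ioi (0:ℝ), 0 ≤ r t ^ lam * t ^ (lam * (β + δ)) / t := fun t ht =>
      div_nonneg (mul_nonneg (Real.rpow_nonneg (hrpos t ht).le _)
        (Real.rpow_nonneg (le_of_lt ht) _)) (le_of_lt ht)
    have hRHSnn : 0 ≤ ∫ t in Ioi (0:ℝ), r t ^ lam * t ^ (lam * (β + δ)) / t :=
      setIntegral_nonneg measurableSet_Ioi hΨnn
    by_cases hint : IntegrableOn (fun s => s ^ β * r s) (Ioc 0 1) volume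
    · -- integrable case
      have hIntAll : ∀ t > (0:ℝ), IntegrableOn (fun s => s ^ β * r s) (Ioc 0 t) volume := by
        intro t ht
        rcases le_or_gt t 1 with h | h
        · exact hint.mono_set (Ioc_subset_Ioc_right h)
        · have h3 := hint.union (intOn_Ioc β hβ r hr hrpos (a := 1) (b := t) one_pos)
          rwa [Ioc_union_Ioc_eq_Ioc zero_le_one h.le] at h3
      have hRnn : ∀ t > (0:ℝ), 0 ≤ R t := by
        intro t ht
        rw [hRdef t ht, intervalIntegral.integral_of_le ht.le]
        exact setIntegral_nonneg measurableSet_Ioc fun s hs =>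
          mul_nonneg (Real.rpow_nonneg hs.1.le _) (hrpos s hs.1).le
      have hRT : ∀ t > (0:ℝ), ENNReal.ofReal (R t)
          = ∫⁻ s in Ioc (0:ℝ) t, ENNReal.ofReal (s ^ β * r s) := by
        intro t ht
        rw [hRdef t ht, intervalIntegral.integral_of_le ht.le]
        refine ofReal_integral_eq_lintegral_ofReal (hIntAll t ht) ?_
        exact (ae_restrict_iff' measurableSet_Ioc).2 (ae_of_all _ fun s hs =>
          mul_nonneg (Real.rpow_nonneg hs.1.le _) (hrpos s hs.1).le)
      have hΦeq : ∫⁻ t in Ioi (0:ℝ), ENNReal.ofReal ((R t / t) ^ lam * t ^ (δ * lam) / t)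
          = ∫⁻ t in Ioi (0:ℝ),
            (∫⁻ s in Ioc (0:ℝ) t, ENNReal.ofReal (s ^ β * r s)) ^ lam
              * (ENNReal.ofReal t) ^ E := by
        refine lintegral_congr_ae ((ae_restrict_iff' measurableSet_Ioi).2
          (ae_of_all _ fun t ht => ?_))
        have ht : (0:ℝ) < t := ht
        beta_reduce
        have e1 : (R t / t) ^ lam * t ^ (δ * lam) / t = R t ^ lam * t ^ E := by
          rw [hE, Real.div_rpow (hRnn t ht) ht.le,
            Real.rpow_sub ht, Real.rpow_sub ht, Real.rpow_one]
          ring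
        rw [e1, ENNReal.ofReal_mul (Real.rpow_nonneg (hRnn t ht) _),
          ← ENNReal.ofReal_rpow_of_nonneg (hRnn t ht) hlam.le,
          ← ENNReal.ofReal_rpow_of_pos ht, hRT t ht]
      have hΨeq : ∫⁻ t in Ioi (0:ℝ), ENNReal.ofReal (r t ^ lam * t ^ (lam * (β + δ)) / t)
          = ∫⁻ u in Ioi (0:ℝ),
            (ENNReal.ofReal (r u)) ^ lam * (ENNReal.ofReal u) ^ (lam*(β+1) + E) := by
        refine lintegral_congr_ae ((ae_restrict_iff' measurableSet_Ioi).2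
          (ae_of_all _ fun t ht => ?_))
        have ht : (0:ℝ) < t := ht
        beta_reduce
        have e1 : r t ^ lam * t ^ (lam * (β + δ)) / t = r t ^ lam * t ^ (lam*(β+1) + E) := by
          rw [show lam*(β+1) + E = lam*(β+δ) - 1 by rw [hE]; ring,
            Real.rpow_sub ht, Real.rpow_one, mul_div_assoc]
        rw [e1, ENNReal.ofReal_mul (Real.rpow_nonneg (hrpos t ht).le _),
          ← ENNReal.ofReal_rpow_of_nonneg (hrpos t ht).le hlam.le,
          ← ENNReal.ofReal_rpow_of_pos ht]
      have hmain := hkey r (fun t => Ioc 0 t) hr hrpos (fun t ht => cover_lt ht)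
      have hrev := revB_lt β lam E hβ hlam r hr hrpos
      by_cases hLint : Integrable (fun t => (R t / t) ^ lam * t ^ (δ * lam) / t)
        (volume.restrict (Ioi (0:ℝ)))
      · have hΦnn : 0 ≤ᵐ[volume.restrict (Ioi (0:ℝ))]
            fun t => (R t / t) ^ lam * t ^ (δ * lam) / t :=
          (ae_restrict_iff' measurableSet_Ioi).2 (ae_of_all _ fun t ht =>
            div_nonneg (mul_nonneg (Real.rpow_nonneg (div_nonneg (hRnn t ht) (le_of_lt ht)) _)
              (Real.rpow_nonneg (le_of_lt ht) _)) (le_of_lt ht))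
        have hofΦ : ENNReal.ofReal (∫ t in Ioi (0:ℝ), (R t / t) ^ lam * t ^ (δ * lam) / t)
            = ∫⁻ t in Ioi (0:ℝ),
              (∫⁻ s in Ioc (0:ℝ) t, ENNReal.ofReal (s ^ β * r s)) ^ lam
                * (ENNReal.ofReal t) ^ E := by
          rw [ofReal_integral_eq_lintegral_ofReal hLint hΦnn, hΦeq]
        have hGtop : (∫⁻ t in Ioi (0:ℝ),
            (∫⁻ s in Ioc (0:ℝ) t, ENNReal.ofReal (s ^ β * r s)) ^ lam
              * (ENNReal.ofReal t) ^ E) ≠ ⊤ := by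
          rw [← hofΦ]; exact ofReal_ne_top
        have hJtop : (∫⁻ u in Ioi (0:ℝ),
            (ENNReal.ofReal (r u)) ^ lam * (ENNReal.ofReal u) ^ (lam*(β+1) + E)) ≠ ⊤ := by
          refine (lt_of_le_of_lt hrev ?_).ne
          exact ENNReal.mul_lt_top (ofReal_rpow_ne_top (by positivity) _).lt_top hGtop.lt_top
        have hΨint : Integrable (fun t => r t ^ lam * t ^ (lam * (β + δ)) / t)
            (volume.restrict (Ioi (0:ℝ))) := by
          refine ⟨(((hrA.pow aemeasurable_const).mul
            ((measurable_id'.pow measurable_const).aemeasurable)).div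
              measurable_id'.aemeasurable).aestronglyMeasurable, ?_⟩
          rw [hasFiniteIntegral_iff_norm]
          have e2 : ∫⁻ t in Ioi (0:ℝ), ENNReal.ofReal ‖r t ^ lam * t ^ (lam * (β + δ)) / t‖
              = ∫⁻ t in Ioi (0:ℝ), ENNReal.ofReal (r t ^ lam * t ^ (lam * (β + δ)) / t) := by
            refine lintegral_congr_ae ((ae_restrict_iff' measurableSet_Ioi).2
              (ae_of_all _ fun t ht => ?_))
            beta_reduce
            rw [Real.norm_eq_abs, abs_of_nonneg (hΨnn t ht)]
          rw [e2, hΨeq]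
          exact hJtop.lt_top
        have hΨval : ENNReal.ofReal (∫ t in Ioi (0:ℝ), r t ^ lam * t ^ (lam * (β + δ)) / t)
            = ∫⁻ u in Ioi (0:ℝ),
              (ENNReal.ofReal (r u)) ^ lam * (ENNReal.ofReal u) ^ (lam*(β+1) + E) := by
          rw [ofReal_integral_eq_lintegral_ofReal hΨint
            ((ae_restrict_iff' measurableSet_Ioi).2 (ae_of_all _ hΨnn)), hΨeq]
        have h1 : ∫ t in Ioi (0:ℝ), (R t / t) ^ lam * t ^ (δ * lam) / t
            = (∫⁻ t in Ioi (0:ℝ),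
              (∫⁻ s in Ioc (0:ℝ) t, ENNReal.ofReal (s ^ β * r s)) ^ lam
                * (ENNReal.ofReal t) ^ E).toReal := by
          rw [← hofΦ, ENNReal.toReal_ofReal (integral_nonneg_of_ae hΦnn)]
        have h2 : ∫ t in Ioi (0:ℝ), r t ^ lam * t ^ (lam * (β + δ)) / t
            = (∫⁻ u in Ioi (0:ℝ),
              (ENNReal.ofReal (r u)) ^ lam * (ENNReal.ofReal u) ^ (lam*(β+1) + E)).toReal := by
          rw [← hΨval, ENNReal.toReal_ofReal hRHSnn]
        rw [h1, h2]
        calc (∫⁻ t in Ioi (0:ℝ),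
              (∫⁻ s in Ioc (0:ℝ) t, ENNReal.ofReal (s ^ β * r s)) ^ lam
                * (ENNReal.ofReal t) ^ E).toReal
            ≤ (CA * ∫⁻ u in Ioi (0:ℝ), (ENNReal.ofReal (r u)) ^ lam
                * (ENNReal.ofReal u) ^ (lam*(β+1) + E)).toReal :=
              ENNReal.toReal_mono (ENNReal.mul_ne_top hCAtop hJtop) hmain
          _ = CA.toReal * (∫⁻ u in Ioi (0:ℝ), (ENNReal.ofReal (r u)) ^ lam
                * (ENNReal.ofReal u) ^ (lam*(β+1) + E)).toReal := ENNReal.toReal_mul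
          _ ≤ max CA.toReal 1 * (∫⁻ u in Ioi (0:ℝ), (ENNReal.ofReal (r u)) ^ lam
                * (ENNReal.ofReal u) ^ (lam*(β+1) + E)).toReal :=
              mul_le_mul_of_nonneg_right (le_max_left _ _) ENNReal.toReal_nonneg
      · rw [integral_undef hLint]
        exact mul_nonneg (le_of_lt (lt_of_lt_of_le one_pos (le_max_right _ _))) hRHSnn
    · -- non-integrable case : R vanishes
      have hR0 : ∀ t > (0:ℝ), R t = 0 := by
        intro t ht
        rw [hRdef t ht]
        refine intervalIntegral.integral_undef ?_
        rw [intervalIntegrable_iff, uIoc_of_le ht.le]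
        intro hcon
        refine hint ?_
        rcases le_or_gt 1 t with h | h
        · exact hcon.mono_set (Ioc_subset_Ioc_right h)
        · have h3 := hcon.union (intOn_Ioc β hβ r hr hrpos (a := t) (b := 1) ht)
          rwa [Ioc_union_Ioc_eq_Ioc ht.le h.le] at h3
      have hL0 : ∫ t in Ioi (0:ℝ), (R t / t) ^ lam * t ^ (δ * lam) / t = 0 := by
        rw [setIntegral_congr_fun measurableSet_Ioi (g := fun _ => (0:ℝ)) (fun t ht => by
          rw [hR0 t ht, zero_div, Real.zero_rpow hlam.ne', zero_mul, zero_div])]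
        simp
      rw [hL0]
      exact mul_nonneg (le_of_lt (lt_of_lt_of_le one_pos (le_max_right _ _))) hRHSnn
  · -- case δ > 1
    set ε := (δ - 1)/2 with hεdef
    have hε : 0 < ε := by rw [hεdef]; linarith
    set c : ℕ → ℝ := fun k => (2:ℝ)^k with hcdef
    have hc : ∀ k, 0 < c k := fun k => by rw [hcdef]; positivity
    have hS : ∑' (k:ℕ), (2:ℝ≥0∞) ^ (ε * lam * (k:ℝ)) * (ENNReal.ofReal (c k)) ^ (-(E+1)) ≠ ⊤ := by
      have e : ∀ k:ℕ, (2:ℝ≥0∞) ^ (ε * lam * (k:ℝ)) * (ENNReal.ofReal (c k)) ^ (-(E+1))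
          = (2:ℝ≥0∞) ^ ((ε*lam - (E+1)) * (k:ℝ) + 0) := by
        intro k
        rw [hcdef]
        simp only []
        rw [two_pow_rpow k (-(E+1)), ← ENNReal.rpow_add _ _ two_ne_zero ofNat_ne_top]
        congr 1
        push_cast
        ring
      rw [tsum_congr e]
      refine geom_ne_top _ _ ?_
      have h1 : ε * lam - (E + 1) = - (lam * (δ - 1) / 2) := by rw [hεdef, hE]; ring
      rw [h1]
      have := mul_pos hlam (by linarith : (0:ℝ) < δ - 1)
      nlinarith
    obtain ⟨CA, hCAtop, hkey⟩ := key β lam ε E hβ hlam hε c hc hS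
    obtain ⟨K, hKtop, hrevf⟩ := revB_gt β lam E hβ hlam
    refine ⟨max CA.toReal 1, lt_of_lt_of_le one_pos (le_max_right _ _), ?_⟩
    intro r R hrpos hr _ hRgt
    have hRdef := hRgt hδ1
    have hrA : AEMeasurable r (volume.restrict (Ioi (0:ℝ))) :=
      aemeasurable_restrict_of_antitoneOn measurableSet_Ioi hr
    have hΨnn : ∀ t ∈ Ioi (0:ℝ), 0 ≤ r t ^ lam * t ^ (lam * (β + δ)) / t := fun t ht =>
      div_nonneg (mul_nonneg (Real.rpow_nonneg (hrpos t ht).le _)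
        (Real.rpow_nonneg (le_of_lt ht) _)) (le_of_lt ht)
    have hRHSnn : 0 ≤ ∫ t in Ioi (0:ℝ), r t ^ lam * t ^ (lam * (β + δ)) / t :=
      setIntegral_nonneg measurableSet_Ioi hΨnn
    by_cases hint : IntegrableOn (fun s => s ^ β * r s) (Ioi 1) volume
    · -- integrable case
      have hIntAll : ∀ t > (0:ℝ), IntegrableOn (fun s => s ^ β * r s) (Ioi t) volume := by
        intro t ht
        rcases le_or_gt 1 t with h | h
        · exact hint.mono_set (Ioi_subset_Ioi h)
        · have h3 := (intOn_Ioc β hβ r hr hrpos (a := t) (b := 1) ht).union hint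
          rwa [Ioc_union_Ioi_eq_Ioi h.le] at h3
      have hRnn : ∀ t > (0:ℝ), 0 ≤ R t := by
        intro t ht
        rw [hRdef t ht]
        exact setIntegral_nonneg measurableSet_Ioi fun s hs =>
          mul_nonneg (Real.rpow_nonneg (lt_trans ht hs).le _) (hrpos s (lt_trans ht hs)).le
      have hRT : ∀ t > (0:ℝ), ENNReal.ofReal (R t)
          = ∫⁻ s in Ioi t, ENNReal.ofReal (s ^ β * r s) := by
        intro t ht
        rw [hRdef t ht]
        refine ofReal_integral_eq_lintegral_ofReal (hIntAll t ht) ?_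
        exact (ae_restrict_iff' measurableSet_Ioi).2 (ae_of_all _ fun s hs =>
          mul_nonneg (Real.rpow_nonneg (lt_trans ht hs).le _) (hrpos s (lt_trans ht hs)).le)
      have hΦeq : ∫⁻ t in Ioi (0:ℝ), ENNReal.ofReal ((R t / t) ^ lam * t ^ (δ * lam) / t)
          = ∫⁻ t in Ioi (0:ℝ),
            (∫⁻ s in Ioi t, ENNReal.ofReal (s ^ β * r s)) ^ lam
              * (ENNReal.ofReal t) ^ E := by
        refine lintegral_congr_ae ((ae_restrict_iff' measurableSet_Ioi).2
          (ae_of_all _ fun t ht => ?_))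
        have ht : (0:ℝ) < t := ht
        beta_reduce
        have e1 : (R t / t) ^ lam * t ^ (δ * lam) / t = R t ^ lam * t ^ E := by
          rw [hE, Real.div_rpow (hRnn t ht) ht.le,
            Real.rpow_sub ht, Real.rpow_sub ht, Real.rpow_one]
          ring
        rw [e1, ENNReal.ofReal_mul (Real.rpow_nonneg (hRnn t ht) _),
          ← ENNReal.ofReal_rpow_of_nonneg (hRnn t ht) hlam.le,
          ← ENNReal.ofReal_rpow_of_pos ht, hRT t ht]
      have hΨeq : ∫⁻ t in Ioi (0:ℝ), ENNReal.ofReal (r t ^ lam * t ^ (lam * (β + δ)) / t)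
          = ∫⁻ u in Ioi (0:ℝ),
            (ENNReal.ofReal (r u)) ^ lam * (ENNReal.ofReal u) ^ (lam*(β+1) + E) := by
        refine lintegral_congr_ae ((ae_restrict_iff' measurableSet_Ioi).2
          (ae_of_all _ fun t ht => ?_))
        have ht : (0:ℝ) < t := ht
        beta_reduce
        have e1 : r t ^ lam * t ^ (lam * (β + δ)) / t = r t ^ lam * t ^ (lam*(β+1) + E) := by
          rw [show lam*(β+1) + E = lam*(β+δ) - 1 by rw [hE]; ring,
            Real.rpow_sub ht, Real.rpow_one, mul_div_assoc]
        rw [e1, ENNReal.ofReal_mul (Real.rpow_nonneg (hrpos t ht).le _),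
          ← ENNReal.ofReal_rpow_of_nonneg (hrpos t ht).le hlam.le,
          ← ENNReal.ofReal_rpow_of_pos ht]
      have hmain := hkey r (fun t => Ioi t) hr hrpos (fun t ht => cover_gt ht)
      have hrev := hrevf r hr hrpos
      by_cases hLint : Integrable (fun t => (R t / t) ^ lam * t ^ (δ * lam) / t)
        (volume.restrict (Ioi (0:ℝ)))
      · have hΦnn : 0 ≤ᵐ[volume.restrict (Ioi (0:ℝ))]
            fun t => (R t / t) ^ lam * t ^ (δ * lam) / t :=
          (ae_restrict_iff' measurableSet_Ioi).2 (ae_of_all _ fun t ht =>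
            div_nonneg (mul_nonneg (Real.rpow_nonneg (div_nonneg (hRnn t ht) (le_of_lt ht)) _)
              (Real.rpow_nonneg (le_of_lt ht) _)) (le_of_lt ht))
        have hofΦ : ENNReal.ofReal (∫ t in Ioi (0:ℝ), (R t / t) ^ lam * t ^ (δ * lam) / t)
            = ∫⁻ t in Ioi (0:ℝ),
              (∫⁻ s in Ioi t, ENNReal.ofReal (s ^ β * r s)) ^ lam
                * (ENNReal.ofReal t) ^ E := by
          rw [ofReal_integral_eq_lintegral_ofReal hLint hΦnn, hΦeq]
        have hGtop : (∫⁻ t in Ioi (0:ℝ),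
            (∫⁻ s in Ioi t, ENNReal.ofReal (s ^ β * r s)) ^ lam
              * (ENNReal.ofReal t) ^ E) ≠ ⊤ := by
          rw [← hofΦ]; exact ofReal_ne_top
        have hJtop : (∫⁻ u in Ioi (0:ℝ),
            (ENNReal.ofReal (r u)) ^ lam * (ENNReal.ofReal u) ^ (lam*(β+1) + E)) ≠ ⊤ := by
          refine (lt_of_le_of_lt hrev ?_).ne
          exact ENNReal.mul_lt_top hKtop.lt_top hGtop.lt_top
        have hΨint : Integrable (fun t => r t ^ lam * t ^ (lam * (β + δ)) / t)
            (volume.restrict (Ioi (0:ℝ))) := by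
          refine ⟨(((hrA.pow aemeasurable_const).mul
            ((measurable_id'.pow measurable_const).aemeasurable)).div
              measurable_id'.aemeasurable).aestronglyMeasurable, ?_⟩
          rw [hasFiniteIntegral_iff_norm]
          have e2 : ∫⁻ t in Ioi (0:ℝ), ENNReal.ofReal ‖r t ^ lam * t ^ (lam * (β + δ)) / t‖
              = ∫⁻ t in Ioi (0:ℝ), ENNReal.ofReal (r t ^ lam * t ^ (lam * (β + δ)) / t) := by
            refine lintegral_congr_ae ((ae_restrict_iff' measurableSet_Ioi).2
              (ae_of_all _ fun t ht => ?_))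
            beta_reduce
            rw [Real.norm_eq_abs, abs_of_nonneg (hΨnn t ht)]
          rw [e2, hΨeq]
          exact hJtop.lt_top
        have hΨval : ENNReal.ofReal (∫ t in Ioi (0:ℝ), r t ^ lam * t ^ (lam * (β + δ)) / t)
            = ∫⁻ u in Ioi (0:ℝ),
              (ENNReal.ofReal (r u)) ^ lam * (ENNReal.ofReal u) ^ (lam*(β+1) + E) := by
          rw [ofReal_integral_eq_lintegral_ofReal hΨint
            ((ae_restrict_iff' measurableSet_Ioi).2 (ae_of_all _ hΨnn)), hΨeq]
        have h1 : ∫ t in Ioi (0:ℝ), (R t / t) ^ lam * t ^ (δ * lam) / t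
            = (∫⁻ t in Ioi (0:ℝ),
              (∫⁻ s in Ioi t, ENNReal.ofReal (s ^ β * r s)) ^ lam
                * (ENNReal.ofReal t) ^ E).toReal := by
          rw [← hofΦ, ENNReal.toReal_ofReal (integral_nonneg_of_ae hΦnn)]
        have h2 : ∫ t in Ioi (0:ℝ), r t ^ lam * t ^ (lam * (β + δ)) / t
            = (∫⁻ u in Ioi (0:ℝ),
              (ENNReal.ofReal (r u)) ^ lam * (ENNReal.ofReal u) ^ (lam*(β+1) + E)).toReal := by
          rw [← hΨval, ENNReal.toReal_ofReal hRHSnn]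
        rw [h1, h2]
        calc (∫⁻ t in Ioi (0:ℝ),
              (∫⁻ s in Ioi t, ENNReal.ofReal (s ^ β * r s)) ^ lam
                * (ENNReal.ofReal t) ^ E).toReal
            ≤ (CA * ∫⁻ u in Ioi (0:ℝ), (ENNReal.ofReal (r u)) ^ lam
                * (ENNReal.ofReal u) ^ (lam*(β+1) + E)).toReal :=
              ENNReal.toReal_mono (ENNReal.mul_ne_top hCAtop hJtop) hmain
          _ = CA.toReal * (∫⁻ u in Ioi (0:ℝ), (ENNReal.ofReal (r u)) ^ lam
                * (ENNReal.ofReal u) ^ (lam*(β+1) + E)).toReal := ENNReal.toReal_mul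
          _ ≤ max CA.toReal 1 * (∫⁻ u in Ioi (0:ℝ), (ENNReal.ofReal (r u)) ^ lam
                * (ENNReal.ofReal u) ^ (lam*(β+1) + E)).toReal :=
              mul_le_mul_of_nonneg_right (le_max_left _ _) ENNReal.toReal_nonneg
      · rw [integral_undef hLint]
        exact mul_nonneg (le_of_lt (lt_of_lt_of_le one_pos (le_max_right _ _))) hRHSnn
    · -- non-integrable case : R vanishes
      have hR0 : ∀ t > (0:ℝ), R t = 0 := by
        intro t ht
        rw [hRdef t ht]
        refine integral_undef ?_
        intro hcon
        refine hint ?_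
        rcases le_or_gt t 1 with h | h
        · exact MeasureTheory.IntegrableOn.mono_set hcon (Ioi_subset_Ioi h)
        · have h3 := (intOn_Ioc β hβ r hr hrpos (a := 1) (b := t) one_pos).union hcon
          rwa [Ioc_union_Ioi_eq_Ioi h.le] at h3
      have hL0 : ∫ t in Ioi (0:ℝ), (R t / t) ^ lam * t ^ (δ * lam) / t = 0 := by
        rw [setIntegral_congr_fun measurableSet_Ioi (g := fun _ => (0:ℝ)) (fun t ht => by
          rw [hR0 t ht, zero_div, Real.zero_rpow hlam.ne', zero_mul, zero_div])]
        simp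
      rw [hL0]
      exact mul_nonneg (le_of_lt (lt_of_lt_of_le one_pos (le_max_right _ _))) hRHSnn
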